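/- Let V⁺ = (V⁺_𝐒)_𝐒 be an operator-collection in which every word 𝐒 with V⁺_𝐒 ≠ 0 satisfies S_e = S₋ = ∅ and S₊ ≠ ∅. Define the operator A⁺₀ = Σ_𝐒 (i/|S₊|)·V⁺_𝐒 and V⁺ = Σ_𝐒 V⁺_𝐒. Then (1−P)·(i[H₀, A⁺₀] + V⁺)·P = 0, where P is the codespace projector of H₀. -/

import Mathlib

open scoped BigOperators
set_option linter.unusedSectionVars false
open Matrix

noncomputable section

namespace QLDPC

open scoped Classical

/-- The four Pauli matrices 1, X, Y, Z. -/
def pauliMat : Fin 4 → Matrix (Fin 2) (Fin 2) ℂ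
  | 0 => 1
  | 1 => !![0, 1; 1, 0]
  | 2 => !![0, -Complex.I; Complex.I, 0]
  | 3 => !![1, 0; 0, -1]

variable {Λ E : Type}

/-- Operators on the Hilbert space (ℂ²)^{⊗Λ}. -/
abbrev Op (Λ : Type) [Fintype Λ] [DecidableEq Λ] := Matrix (Λ → Fin 2) (Λ → Fin 2) ℂ

/-- The operator of a Pauli string `p : Λ → Fin 4`. -/
def pauliOp [Fintype Λ] [DecidableEq Λ] (p : Λ → Fin 4) : Op Λ :=
  fun f g => ∏ x, pauliMat (p x) (f x) (g x)

/-- Qubit support of a Pauli string. -/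
def psupp [Fintype Λ] (p : Λ → Fin 4) : Finset Λ :=
  Finset.univ.filter fun x => p x ≠ 0

/-- The operator norm (largest singular value). -/
def opNorm [Fintype Λ] [DecidableEq Λ] (A : Op Λ) : ℝ :=
  ‖Matrix.toEuclideanCLM (𝕜 := ℂ) A‖

/-- Coefficient of the Pauli string `p` in the Pauli-basis expansion of `A`. -/
def pauliCoeff [Fintype Λ] [DecidableEq Λ] (A : Op Λ) (p : Λ → Fin 4) : ℂ :=
  Matrix.trace (pauliOp p * A) / ((2 : ℂ) ^ Fintype.card Λ)

/-- Qubit support of a general operator, via its Pauli expansion. -/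
def opSupp [Fintype Λ] [DecidableEq Λ] (A : Op Λ) : Set Λ :=
  {x | ∃ p : Λ → Fin 4, pauliCoeff A p ≠ 0 ∧ p x ≠ 0}

/-- The data of a family of stabilizer checks: each check is a signed Pauli string. -/
structure Checks (Λ E : Type) where
  str : E → Λ → Fin 4
  sgn : E → Bool

variable [Fintype Λ] [DecidableEq Λ] [Fintype E]

/-- The operator of check α. -/
def checkOp (K : Checks Λ E) (α : E) : Op Λ :=
  (if K.sgn α then (-1 : ℂ) else 1) • pauliOp (K.str α)

/-- G_α = (1 + C_α)/2. -/
def Gop (K : Checks Λ E) (α : E) : Op Λ := (2⁻¹ : ℂ) • (1 + checkOp K α)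

/-- E_α = (1 - C_α)/2. -/
def Eop (K : Checks Λ E) (α : E) : Op Λ := (2⁻¹ : ℂ) • (1 - checkOp K α)

/-- The stabilizer Hamiltonian H₀ = Σ_α E_α. -/
def H0 (K : Checks Λ E) : Op Λ := ∑ α, Eop K α

/-- The stabilizer group 𝒢 generated by the checks (as a submonoid; each check squares to 1). -/
def stab (K : Checks Λ E) : Submonoid (Op Λ) :=
  Submonoid.closure (Set.range (checkOp K))

/-- All checks pairwise commute (𝒢 abelian). -/
def CommChecks (K : Checks Λ E) : Prop := ∀ α β, Commute (checkOp K α) (checkOp K β)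

/-- Check support of a qubit. -/
def suppC (K : Checks Λ E) (x : Λ) : Finset E :=
  Finset.univ.filter fun α => x ∈ psupp (K.str α)

/-- The qubit interaction graph. -/
def qubitGraph (K : Checks Λ E) : SimpleGraph Λ :=
  SimpleGraph.fromRel fun x y => ∃ α, x ∈ psupp (K.str α) ∧ y ∈ psupp (K.str α)

/-- The check interaction graph. -/
def checkGraph (K : Checks Λ E) : SimpleGraph E :=
  SimpleGraph.fromRel fun α β => (psupp (K.str α) ∩ psupp (K.str β)).Nonempty

/-- `y` lies in the (closed) ball of radius `r` around `x` in the graph `G`. -/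
def inBall {V : Type} (G : SimpleGraph V) (x y : V) (r : ℝ) : Prop :=
  G.Reachable x y ∧ (G.dist x y : ℝ) ≤ r

/-- Ball in the qubit graph. -/
def ballQ (K : Checks Λ E) (x : Λ) (r : ℝ) : Finset Λ :=
  Finset.univ.filter fun y => inBall (qubitGraph K) x y r

/-- Ball in the check graph. -/
def ballC (K : Checks Λ E) (α : E) (r : ℝ) : Finset E :=
  Finset.univ.filter fun β => inBall (checkGraph K) α β r

/-- Ball of radius `r` around a set of checks. -/
def ballCS (K : Checks Λ E) (S : Finset E) (r : ℝ) : Finset E :=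
  Finset.univ.filter fun β => ∃ α ∈ S, inBall (checkGraph K) α β r

/-- Growth of balls condition: |B_r| ≤ e^{κ r} on both graphs. -/
def BallGrowth (K : Checks Λ E) (κ : ℝ) : Prop :=
  (∀ (x : Λ) (r : ℝ), ((ballQ K x r).card : ℝ) ≤ Real.exp (κ * r)) ∧
  (∀ (α : E) (r : ℝ), ((ballC K α r).card : ℝ) ≤ Real.exp (κ * r))

/-- A finite set is connected in a graph if the induced subgraph is connected. -/
def ConnIn {V : Type} (G : SimpleGraph V) (S : Finset V) : Prop :=
  (G.induce (S : Set V)).Connected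

/-- Qubit support of a set of checks. -/
def suppSet (K : Checks Λ E) (S : Finset E) : Set Λ :=
  ↑(S.biUnion fun α => psupp (K.str α))

variable [LinearOrder E]

/-- Ordered product of operators over a finite set of check labels. -/
def ordProd (S : Finset E) (f : E → Op Λ) : Op Λ :=
  ((S.sort (· ≤ ·)).map f).prod

/-- The codespace projector P = ∏_α G_α (for commuting checks). -/
def Pmat (K : Checks Λ E) : Op Λ := ordProd Finset.univ (Gop K)

/-- The code distance: minimal support of a Pauli string p with P p P not proportional to P. -/
def codeDist (K : Checks Λ E) : ℕ :=
  sInf ((fun p => (psupp p).card) ''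
    {p : Λ → Fin 4 | ¬∃ cc : ℂ, Pmat K * pauliOp p * Pmat K = cc • Pmat K})

/-- TQO-I: Pauli strings of weight below the code distance commuting with 𝒢 belong to 𝒢. -/
def TQO1 (K : Checks Λ E) : Prop :=
  ∀ p : Λ → Fin 4, (psupp p).card < codeDist K →
    (∀ g ∈ stab K, Commute (pauliOp p) g) → pauliOp p ∈ stab K

/-- TQO-II: group elements locally supported on a small connected check set S are generated by
checks within distance ℓ|S| of S. -/
def TQO2 (K : Checks Λ E) (ℓ dtil : ℝ) : Prop :=
  ∀ S : Finset E, ConnIn (checkGraph K) S → (S.card : ℝ) < dtil →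
    ∀ g ∈ stab K, opSupp (g : Op Λ) ⊆ suppSet K S →
      (g : Op Λ) ∈ Submonoid.closure (checkOp K '' {α | ∃ β ∈ S, inBall (checkGraph K) β α (ℓ * S.card)})

/-! ### Words and operator-collections -/

/-- A word: a quadruple of pairwise disjoint subsets of the checks,
labelled (+, -, excited, ground). -/
structure Word (E : Type) where
  p : Finset E
  m : Finset E
  e : Finset E
  g : Finset E
  hpm : Disjoint p m
  hpe : Disjoint p e
  hpg : Disjoint p g
  hme : Disjoint m e
  hmg : Disjoint m g
  heg : Disjoint e g

/-- The underlying set of the word. -/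
def Word.S [DecidableEq E] (w : Word E) : Finset E := w.p ∪ w.m ∪ w.e ∪ w.g

instance : Fintype (Word E) := by
  classical
  exact Fintype.ofInjective (fun w : Word E => (w.p, w.m, w.e, w.g))
    (by
      rintro ⟨a1, a2, a3, a4, _, _, _, _, _, _⟩ ⟨b1, b2, b3, b4, _, _, _, _, _, _⟩ h
      simp only [Prod.mk.injEq] at h
      obtain ⟨h1, h2, h3, h4⟩ := h
      subst h1; subst h2; subst h3; subst h4; rfl)

/-- A word is a ghost if all components except the ground one are empty. -/
def IsGhost (w : Word E) : Prop := w.p = ∅ ∧ w.m = ∅ ∧ w.e = ∅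

/-- The empty word. -/
def emptyWord (E : Type) : Word E :=
  ⟨∅, ∅, ∅, ∅, by simp, by simp, by simp, by simp, by simp, by simp⟩

/-- Left projector assignment of a word. -/
def leftP (K : Checks Λ E) (w : Word E) (α : E) : Op Λ :=
  if α ∈ w.m ∪ w.g then Gop K α else Eop K α

/-- Right projector assignment of a word. -/
def rightP (K : Checks Λ E) (w : Word E) (α : E) : Op Λ :=
  if α ∈ w.p ∪ w.g then Gop K α else Eop K α

/-- The class 𝒳_𝐒 of operators compatible with the word 𝐒. -/
def memClass (K : Checks Λ E) (w : Word E) (X : Op Λ) : Prop :=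
  ∃ Y : Op Λ,
    (∀ α : E, (opSupp Y ∩ (psupp (K.str α) : Set Λ)).Nonempty → α ∈ w.S) ∧
    X = ordProd w.S (leftP K w) * Y * ordProd w.S (rightP K w)

/-- An operator-collection: a family (O_𝐒)_𝐒 with O_𝐒 ∈ 𝒳_𝐒. -/
def IsColl (K : Checks Λ E) (O : Word E → Op Λ) : Prop :=
  ∀ w, memClass K w (O w)

/-- The intensive word norm ‖O‖_μ of an operator-collection. -/
def wordNorm (μ : ℝ) (O : Word E → Op Λ) : ℝ :=
  ⨆ α : E, ∑ w : Word E, (if α ∈ w.S then opNorm (O w) * Real.exp (μ * w.S.card) else 0)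

/-! ### The multiplication table of words -/

/-- Labels of a check in a word: none, ground, excited, raising, lowering. -/
inductive Lbl | N | G | E | P | M
deriving DecidableEq

/-- The multiplication table of labels; `none` encodes that the product vanishes. -/
def lblMul : Lbl → Lbl → Option Lbl
  | .N, x => some x
  | .G, .N => some .G
  | .G, .G => some .G
  | .G, .E => none
  | .G, .P => none
  | .G, .M => some .M
  | .E, .N => some .E
  | .E, .G => none
  | .E, .E => some .E
  | .E, .P => some .P
  | .E, .M => none
  | .P, .N => some .P
  | .P, .G => some .P
  | .P, .E => none
  | .P, .P => none
  | .P, .M => some .E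
  | .M, .N => some .M
  | .M, .G => none
  | .M, .E => some .M
  | .M, .P => some .G
  | .M, .M => none

/-- The label of a check in a word. -/
def Word.lbl [DecidableEq E] (w : Word E) (α : E) : Lbl :=
  if α ∈ w.p then .P else if α ∈ w.m then .M else if α ∈ w.e then .E
  else if α ∈ w.g then .G else .N

/-- The product of two words is defined (the corresponding operator product does not vanish
identically by the multiplication table). -/
def MulDef (w' w : Word E) : Prop :=
  ∀ α : E, lblMul (w'.lbl α) (w.lbl α) ≠ none

private lemma disj_aux {f : E → Option Lbl} {a b : Lbl} (hab : a ≠ b) :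
    Disjoint (Finset.univ.filter fun α => f α = some a)
      (Finset.univ.filter fun α => f α = some b) := by
  rw [Finset.disjoint_left]
  intro x hx hy
  simp only [Finset.mem_filter] at hx hy
  exact hab (Option.some.inj (hx.2.symm.trans hy.2))

/-- The product word 𝐒'𝐒 (meaningful when `MulDef w' w`). -/
def wmul (w' w : Word E) : Word E where
  p := Finset.univ.filter fun α => lblMul (w'.lbl α) (w.lbl α) = some .P
  m := Finset.univ.filter fun α => lblMul (w'.lbl α) (w.lbl α) = some .M
  e := Finset.univ.filter fun α => lblMul (w'.lbl α) (w.lbl α) = some .E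
  g := Finset.univ.filter fun α => lblMul (w'.lbl α) (w.lbl α) = some .G
  hpm := disj_aux (by decide)
  hpe := disj_aux (by decide)
  hpg := disj_aux (by decide)
  hme := disj_aux (by decide)
  hmg := disj_aux (by decide)
  heg := disj_aux (by decide)

/-- The commutator of two operator-collections. -/
def collComm (O O' : Word E → Op Λ) : Word E → Op Λ := fun w =>
  ∑ w1 : Word E, ∑ w2 : Word E,
    if MulDef w1 w2 ∧ wmul w1 w2 = w ∧ (w1.S ∩ w2.S).Nonempty
    then O w1 * O' w2 - O' w1 * O w2 else 0

/-- Iterated adjoint action ad_{B_k}⋯ad_{B_1}(B_0) of operator-collections. -/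
def chainAd (B : ℕ → Word E → Op Λ) : ℕ → Word E → Op Λ
  | 0 => B 0
  | k + 1 => collComm (B (k + 1)) (chainAd B k)

/-- exp(i ad_A)(B) for operator-collections, defined componentwise. -/
def expAd (A B : Word E → Op Λ) : Word E → Op Λ := fun w =>
  ∑' k : ℕ, ((Complex.I ^ k / (k.factorial : ℂ)) • ((fun C => collComm A C)^[k] B) w)

/-! ### Sequences of words -/

/-- The running products 𝐒'_i of a sequence of words. -/
def sprime (σ : ℕ → Word E) : ℕ → Word E
  | 0 => σ 0
  | i + 1 => wmul (σ (i + 1)) (sprime σ i)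

/-- The running products with ghost words skipped. -/
def sprimeG (σ : ℕ → Word E) : ℕ → Word E
  | 0 => σ 0
  | i + 1 => if IsGhost (σ (i + 1)) then sprimeG σ i else wmul (σ (i + 1)) (sprimeG σ i)

/-- Extend a finite sequence of words by the empty word. -/
def extend {k : ℕ} (σ : Fin (k + 1) → Word E) : ℕ → Word E :=
  fun i => if h : i < k + 1 then σ ⟨i, h⟩ else emptyWord E

/-! ### Pauli norms -/

/-- Size of a minimal connected set of qubits containing the support of `p`. -/
def mSize (K : Checks Λ E) (p : Λ → Fin 4) : ℕ :=
  sInf {n | ∃ T : Finset Λ, ConnIn (qubitGraph K) T ∧ psupp p ⊆ T ∧ T.card = n}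

/-- The intensive Pauli norm of an operator given by Pauli coefficients `c`. -/
def pauliNormC (K : Checks Λ E) (μ : ℝ) (c : (Λ → Fin 4) → ℂ) : ℝ :=
  ⨆ x : Λ, ∑ p : Λ → Fin 4, (if p x ≠ 0 then ‖c p‖ * Real.exp (μ * (mSize K p : ℝ)) else 0)

/-- The intensive Pauli norm of an operator. -/
def pauliNormOp (K : Checks Λ E) (μ : ℝ) (A : Op Λ) : ℝ :=
  pauliNormC K μ (pauliCoeff A)

/-- Diameter of the qubit graph. -/
def diam (K : Checks Λ E) : ℕ :=
  Finset.univ.sup fun pr : Λ × Λ => (qubitGraph K).dist pr.1 pr.2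

/-- The spectral projector of a Hermitian matrix onto the eigenvalues in [-δ, δ]. -/
def spectralProjLE {n : Type} [Fintype n] [DecidableEq n] {A : Matrix n n ℂ}
    (hA : A.IsHermitian) (δ : ℝ) : Matrix n n ℂ :=
  (hA.eigenvectorUnitary : Matrix n n ℂ) *
    Matrix.diagonal (fun i => if |hA.eigenvalues i| ≤ δ then (1 : ℂ) else 0) *
    star (hA.eigenvectorUnitary : Matrix n n ℂ)



/-! ### Auxiliary lemmas -/

section AuxPauli

variable {Λ : Type} [Fintype Λ] [DecidableEq Λ]

private lemma pauliMat_sq (a : Fin 4) : pauliMat a * pauliMat a = 1 := by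
  fin_cases a <;> ext i j <;> fin_cases i <;> fin_cases j <;>
    simp [pauliMat, Matrix.mul_apply, Fin.sum_univ_two, Matrix.one_apply, Complex.ext_iff] <;>
    norm_num

private lemma pauliMat_complete (i j k l : Fin 2) :
    ∑ a : Fin 4, pauliMat a i j * pauliMat a k l
      = if i = l ∧ j = k then 2 else 0 := by
  fin_cases i <;> fin_cases j <;> fin_cases k <;> fin_cases l <;>
    simp [pauliMat, Fin.sum_univ_four, Matrix.one_apply, Complex.ext_iff] <;> norm_num

private lemma pauliOp_mul (p q : Λ → Fin 4) : pauliOp p * pauliOp q =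
    fun f g => ∏ x, (pauliMat (p x) * pauliMat (q x)) (f x) (g x) := by
  funext f g
  show ∑ h : Λ → Fin 2, (∏ x, pauliMat (p x) (f x) (h x)) * ∏ x, pauliMat (q x) (h x) (g x)
    = _
  simp_rw [← Finset.prod_mul_distrib, Matrix.mul_apply]
  rw [← Fintype.prod_sum (fun x i => pauliMat (p x) (f x) i * pauliMat (q x) i (g x))]

private lemma pauliOp_sq (p : Λ → Fin 4) : pauliOp p * pauliOp p = 1 := by
  rw [pauliOp_mul]
  funext f g
  simp_rw [pauliMat_sq]
  show _ = (1 : Op Λ) f g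
  rw [Matrix.one_apply]
  by_cases h : f = g
  · subst h; simp [Matrix.one_apply]
  · rw [if_neg h]
    obtain ⟨x, hx⟩ : ∃ x, f x ≠ g x := Function.ne_iff.mp h
    exact Finset.prod_eq_zero (Finset.mem_univ x) (by simp [Matrix.one_apply, hx])

private lemma pauli_sum_complete (u h f g : Λ → Fin 2) :
    ∑ p : Λ → Fin 4, pauliOp p u h * pauliOp p f g
      = if u = g ∧ h = f then (2:ℂ)^(Fintype.card Λ) else 0 := by
  unfold pauliOp
  simp_rw [← Finset.prod_mul_distrib]
  rw [← Fintype.prod_sum (fun x a => pauliMat a (u x) (h x) * pauliMat a (f x) (g x))]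
  simp_rw [pauliMat_complete]
  by_cases hc : u = g ∧ h = f
  · obtain ⟨rfl, rfl⟩ := hc
    simp [Finset.prod_const, Finset.card_univ]
  · rw [if_neg hc]
    have hex : ∃ x, ¬(u x = g x ∧ h x = f x) := by
      by_contra hx
      push_neg at hx
      exact hc ⟨funext fun x => (hx x).1, funext fun x => (hx x).2⟩
    obtain ⟨x, hx⟩ := hex
    exact Finset.prod_eq_zero (Finset.mem_univ x) (if_neg hx)

private lemma pauli_expand (A : Op Λ) :
    A = ∑ p : Λ → Fin 4, pauliCoeff A p • pauliOp p := by
  funext f g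
  have h2 : ((2:ℂ) ^ Fintype.card Λ) ≠ 0 := pow_ne_zero _ two_ne_zero
  have key : ∀ u h' : Λ → Fin 2,
      (∑ p : Λ → Fin 4, pauliOp p u h' * A h' u * pauliOp p f g)
        = A h' u * (if u = g ∧ h' = f then (2:ℂ)^(Fintype.card Λ) else 0) := by
    intro u h'
    rw [← pauli_sum_complete u h' f g, Finset.mul_sum]
    exact Finset.sum_congr rfl fun p _ => by ring
  show A f g = _
  simp only [Matrix.sum_apply, Matrix.smul_apply, smul_eq_mul, pauliCoeff, Matrix.trace,
    Matrix.diag, Matrix.mul_apply]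
  simp_rw [div_mul_eq_mul_div, Finset.sum_mul]
  rw [← Finset.sum_div]
  rw [Finset.sum_comm]
  have swap2 : ∀ u : Λ → Fin 2,
      (∑ p : Λ → Fin 4, ∑ h', pauliOp p u h' * A h' u * pauliOp p f g)
        = ∑ h', ∑ p : Λ → Fin 4, pauliOp p u h' * A h' u * pauliOp p f g :=
    fun u => Finset.sum_comm
  simp_rw [swap2, key]
  rw [Finset.sum_eq_single g (fun b _ hb => by
    apply Finset.sum_eq_zero; intro x1 _; rw [if_neg (by tauto)]; ring) (by simp)]
  rw [Finset.sum_eq_single f (fun b _ hb => by rw [if_neg (by tauto)]; ring) (by simp)]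
  rw [if_pos ⟨rfl, rfl⟩, mul_div_assoc, div_self h2, mul_one]

private lemma pauliOp_commute_disj {p q : Λ → Fin 4} (h : ∀ x, p x = 0 ∨ q x = 0) :
    Commute (pauliOp p) (pauliOp (Λ := Λ) q) := by
  show _ = _
  rw [pauliOp_mul, pauliOp_mul]
  funext f g
  refine Finset.prod_congr rfl fun x _ => ?_
  rcases h x with h0 | h0 <;> rw [h0] <;>
    simp [pauliMat]

private lemma commute_pauliOp_of_supp {q : Λ → Fin 4} {Y : Op Λ}
    (h : ∀ x ∈ opSupp Y, q x = 0) : Commute (pauliOp q) Y := by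
  rw [pauli_expand Y]
  refine Commute.sum_right _ _ _ fun p _ => ?_
  by_cases hc : pauliCoeff Y p = 0
  · rw [hc, zero_smul]; exact Commute.zero_right _
  · refine Commute.smul_right ?_ _
    refine pauliOp_commute_disj fun x => ?_
    by_cases hq : q x = 0
    · exact Or.inl hq
    · refine Or.inr (by_contra fun hp => hq (h x ⟨p, hc, hp⟩))

end AuxPauli

section AuxChecks

variable {Λ E : Type} [Fintype Λ] [DecidableEq Λ] [Fintype E] [LinearOrder E]
variable (K : Checks Λ E)

private lemma checkOp_sq (α : E) : checkOp K α * checkOp K α = 1 := by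
  unfold checkOp
  rw [smul_mul_smul_comm, pauliOp_sq]
  rcases hs : K.sgn α <;> simp

private lemma Eop_mul_Gop_self (α : E) : Eop K α * Gop K α = 0 := by
  unfold Eop Gop
  rw [smul_mul_smul_comm, sub_mul, one_mul, mul_add, mul_one, checkOp_sq,
    add_comm (1 : Op Λ) (checkOp K α), sub_self, smul_zero]

private lemma Eop_sq (α : E) : Eop K α * Eop K α = Eop K α := by
  unfold Eop
  rw [smul_mul_smul_comm, sub_mul, one_mul, mul_sub, mul_one, checkOp_sq]
  rw [show (1 : Op Λ) - checkOp K α - (checkOp K α - 1) = (2:ℂ) • (1 - checkOp K α) by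
    rw [two_smul]; abel]
  rw [smul_smul]
  norm_num

private lemma commute_Eop_right {Z : Op Λ} {α : E} (h : Commute Z (checkOp K α)) :
    Commute Z (Eop K α) := by
  unfold Eop
  exact ((Commute.one_right Z).sub_right h).smul_right _

private lemma commute_Gop_right {Z : Op Λ} {α : E} (h : Commute Z (checkOp K α)) :
    Commute Z (Gop K α) := by
  unfold Gop
  exact ((Commute.one_right Z).add_right h).smul_right _

private lemma commute_Eop_left {Z : Op Λ} {α : E} (h : Commute (checkOp K α) Z) :
    Commute (Eop K α) Z := (commute_Eop_right K h.symm).symm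

private lemma commute_Gop_left {Z : Op Λ} {α : E} (h : Commute (checkOp K α) Z) :
    Commute (Gop K α) Z := (commute_Gop_right K h.symm).symm

private lemma ordProd_erase {S : Finset E} (f : E → Op Λ)
    (hf : ∀ a b, Commute (f a) (f b)) {α : E} (hα : α ∈ S) :
    ordProd S f = f α * ordProd (S.erase α) f := by
  unfold ordProd
  have hperm : List.Perm (S.sort (· ≤ ·)) (α :: (S.erase α).sort (· ≤ ·)) := by
    rw [← Multiset.coe_eq_coe]
    rw [← Multiset.cons_coe, Finset.sort_eq, Finset.sort_eq, Finset.erase_val]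
    exact (Multiset.cons_erase (Finset.mem_val.mpr hα)).symm
  have hpair : ((S.sort (· ≤ ·)).map f).Pairwise Commute :=
    List.Pairwise.map f (fun a b _ => hf a b) (Finset.pairwise_sort S (· ≤ ·))
  rw [(hperm.map f).prod_eq' hpair, List.map_cons, List.prod_cons]

private lemma commute_ordProd {X : Op Λ} {S : Finset E} {f : E → Op Λ}
    (h : ∀ β, Commute X (f β)) : Commute X (ordProd S f) :=
  Commute.list_prod_right _ _ fun y hy => by
    obtain ⟨β, _, rfl⟩ := List.mem_map.mp hy; exact h β

private lemma Eop_mul_Pmat (hcomm : CommChecks K) (α : E) : Eop K α * Pmat K = 0 := by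
  have hGG : ∀ a b : E, Commute (Gop K a) (Gop K b) := fun a b =>
    commute_Gop_left K (commute_Gop_right K (hcomm a b))
  unfold Pmat
  rw [ordProd_erase (Gop K) hGG (Finset.mem_univ α), ← mul_assoc, Eop_mul_Gop_self, zero_mul]

end AuxChecks

/-- **The lowest-order generator solves its defining equation.**
Let `V⁺` be an operator-collection all of whose words satisfy `S_e = S₋ = ∅` and `S₊ ≠ ∅`,
and set `A⁺₀ = Σ_𝐒 (i/|S₊|)·V⁺_𝐒`.  Then `(1−P)·(i[H₀,A⁺₀] + V⁺)·P = 0`. -/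
theorem generator_lowest_order {Λ E : Type} [Fintype Λ] [DecidableEq Λ] [Fintype E]
    [LinearOrder E] (K : Checks Λ E) (hcomm : CommChecks K)
    (V : Word E → Op Λ) (hcoll : IsColl K V)
    (hV : ∀ w : Word E, V w ≠ 0 → w.e = ∅ ∧ w.m = ∅ ∧ w.p.Nonempty) :
    ((1 : Op Λ) - Pmat K) *
      (Complex.I •
          (H0 K * (∑ w : Word E, (Complex.I / (w.p.card : ℂ)) • V w) -
            (∑ w : Word E, (Complex.I / (w.p.card : ℂ)) • V w) * H0 K) +
        ∑ w : Word E, V w) * Pmat K = 0 := by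
  classical
  have hEE : ∀ a b : E, Commute (Eop K a) (Eop K b) := fun a b =>
    commute_Eop_left K (commute_Eop_right K (hcomm a b))
  have hEGc : ∀ a b : E, Commute (Eop K a) (Gop K b) := fun a b =>
    commute_Eop_left K (commute_Gop_right K (hcomm a b))
  have hGG : ∀ a b : E, Commute (Gop K a) (Gop K b) := fun a b =>
    commute_Gop_left K (commute_Gop_right K (hcomm a b))
  have hEP : ∀ α : E, Eop K α * Pmat K = 0 := Eop_mul_Pmat K hcomm
  have hH0P : H0 K * Pmat K = 0 := by
    unfold H0
    rw [Finset.sum_mul]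
    exact Finset.sum_eq_zero fun α _ => hEP α
  have key : ∀ w : Word E, V w ≠ 0 →
      H0 K * (V w * Pmat K) = ((w.p.card : ℂ)) • (V w * Pmat K) := by
    intro w hVw
    obtain ⟨he, hm, hp⟩ := hV w hVw
    obtain ⟨Y, hYsupp, hVeq⟩ := hcoll w
    have hLval : ∀ b : E, leftP K w b = Eop K b ∨ leftP K w b = Gop K b := by
      intro b; unfold leftP; split <;> simp
    have hRval : ∀ b : E, rightP K w b = Eop K b ∨ rightP K w b = Gop K b := by
      intro b; unfold rightP; split <;> simp
    have hEL : ∀ (α b : E), Commute (Eop K α) (leftP K w b) := by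
      intro α b; rcases hLval b with h | h <;> rw [h]
      · exact hEE α b
      · exact hEGc α b
    have hER : ∀ (α b : E), Commute (Eop K α) (rightP K w b) := by
      intro α b; rcases hRval b with h | h <;> rw [h]
      · exact hEE α b
      · exact hEGc α b
    have hLcomm : ∀ a b : E, Commute (leftP K w a) (leftP K w b) := by
      intro a b
      rcases hLval a with ha | ha <;> rcases hLval b with hb | hb <;> rw [ha, hb]
      exacts [hEE a b, hEGc a b, (hEGc b a).symm, hGG a b]
    have hEVP : ∀ α : E, Eop K α * (V w * Pmat K) = if α ∈ w.p then V w * Pmat K else 0 := by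
      intro α
      by_cases hαp : α ∈ w.p
      · rw [if_pos hαp]
        have hαS : α ∈ w.S := by
          simp [Word.S, hαp]
        have hLα : leftP K w α = Eop K α := by
          unfold leftP
          rw [if_neg]
          rw [Finset.mem_union]
          push_neg
          exact ⟨Finset.disjoint_left.mp w.hpm hαp, Finset.disjoint_left.mp w.hpg hαp⟩
        rw [hVeq, ordProd_erase (leftP K w) hLcomm hαS, hLα]
        simp only [mul_assoc]
        rw [← mul_assoc (Eop K α) (Eop K α), Eop_sq]
      · rw [if_neg hαp]
        by_cases hαS : α ∈ w.S
        · have hαg : α ∈ w.g := by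
            simp only [Word.S, Finset.mem_union, he, hm, Finset.notMem_empty, or_false,
              false_or] at hαS
            tauto
          have hLα : leftP K w α = Gop K α := by
            unfold leftP
            rw [if_pos (Finset.mem_union_right _ hαg)]
          rw [hVeq, ordProd_erase (leftP K w) hLcomm hαS, hLα]
          simp only [mul_assoc]
          rw [← mul_assoc (Eop K α) (Gop K α), Eop_mul_Gop_self]
          simp
        · have hYc : Commute (Eop K α) Y := by
            apply commute_Eop_left
            unfold checkOp
            refine Commute.smul_left ?_ _
            refine commute_pauliOp_of_supp fun x hx => ?_
            by_contra h0
            exact hαS (hYsupp α ⟨x, hx, by simp [psupp, h0]⟩)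
          have hLc : Commute (Eop K α) (ordProd w.S (leftP K w)) :=
            commute_ordProd fun β => hEL α β
          have hRc : Commute (Eop K α) (ordProd w.S (rightP K w)) :=
            commute_ordProd fun β => hER α β
          rw [hVeq]
          simp only [mul_assoc]
          rw [← mul_assoc (Eop K α), hLc.eq, mul_assoc,
            ← mul_assoc (Eop K α), hYc.eq, mul_assoc,
            ← mul_assoc (Eop K α), hRc.eq, mul_assoc, hEP α]
          simp
    unfold H0
    rw [Finset.sum_mul]
    simp_rw [hEVP]
    rw [Finset.sum_ite_mem, Finset.univ_inter, Finset.sum_const,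
      Nat.cast_smul_eq_nsmul]
  have hterm : ∀ w : Word E,
      (Complex.I / (w.p.card : ℂ)) • (H0 K * (V w * Pmat K))
        = Complex.I • (V w * Pmat K) := by
    intro w
    by_cases hw : V w = 0
    · simp [hw]
    · rw [key w hw, smul_smul, div_mul_cancel₀]
      exact Nat.cast_ne_zero.mpr (hV w hw).2.2.card_pos.ne'
  have hAP : H0 K * ((∑ w : Word E, (Complex.I / (w.p.card : ℂ)) • V w) * Pmat K)
      = Complex.I • ∑ w : Word E, V w * Pmat K := by
    rw [Finset.sum_mul]
    simp_rw [smul_mul_assoc]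
    rw [Finset.mul_sum]
    simp_rw [mul_smul_comm, hterm]
    rw [Finset.smul_sum]
  suffices hM : (Complex.I •
          (H0 K * (∑ w : Word E, (Complex.I / (w.p.card : ℂ)) • V w) -
            (∑ w : Word E, (Complex.I / (w.p.card : ℂ)) • V w) * H0 K) +
        ∑ w : Word E, V w) * Pmat K = 0 by
    rw [mul_assoc, hM, mul_zero]
  rw [add_mul, smul_mul_assoc, sub_mul, mul_assoc, mul_assoc, hH0P, mul_zero, sub_zero,
    hAP, smul_smul, Complex.I_mul_I, Finset.sum_mul, neg_smul, one_smul, neg_add_cancel]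

end QLDPC
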